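/- The Segre cubic Y₀ = {Σ_{i=0}^5 x_i = Σ_{i=0}^5 x_i³ = 0} ⊂ ℙ⁵ has exactly 10 singular points, namely the orbit under permutation of coordinates of the point [1 : 1 : 1 : −1 : −1 : −1], and each of these is an ordinary double point. -/
import Mathlib


open scoped BigOperators

/-- The coordinates of the distinguished singular point `[1 : 1 : 1 : −1 : −1 : −1]`. -/
def segreVec : Fin 6 → ℂ := ![1, 1, 1, -1, -1, -1]

/-- A point lies on the Segre cubic `{Σ xᵢ = Σ xᵢ³ = 0} ⊂ ℙ⁵`. -/
def onSegre (x : Fin 6 → ℂ) : Prop :=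
  (∑ i, x i) = 0 ∧ (∑ i, (x i) ^ 3) = 0

/-- The Jacobian criterion: the gradients of `Σ xᵢ` and `Σ xᵢ³` (i.e. `(1, …, 1)` and
`(3x₀², …, 3x₅²)`) are linearly dependent at `x`. -/
def singularAt (x : Fin 6 → ℂ) : Prop :=
  ∃ l m : ℂ, ¬(l = 0 ∧ m = 0) ∧ ∀ i, l + m * (3 * (x i) ^ 2) = 0

/-- Ordinary double point: the Hessian `Σ 6xᵢ yᵢ zᵢ` of the cubic equation, restricted
to the hyperplane `{Σ yᵢ = 0}`, has kernel exactly the line spanned by `x` (so the local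
quadratic cone is nondegenerate). -/
def isODPAt (x : Fin 6 → ℂ) : Prop :=
  ∀ y : Fin 6 → ℂ, (∑ i, y i) = 0 →
    (∀ z : Fin 6 → ℂ, (∑ i, z i) = 0 → (∑ i, 6 * x i * y i * z i) = 0) →
    ∃ t : ℂ, y = t • x

/-- The singular locus of the Segre cubic, as a subset of `ℙ⁵ = ℙ(ℂ⁶)`. -/
def segreSing : Set (Projectivization ℂ (Fin 6 → ℂ)) :=
  {p | onSegre p.rep ∧ singularAt p.rep}

/-! ### Auxiliary definitions -/

def sgnVec (S : Finset (Fin 6)) : Fin 6 → ℂ := fun i => if i ∈ S then 1 else -1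

lemma sgnVec_sq (S : Finset (Fin 6)) (i : Fin 6) : sgnVec S i ^ 2 = 1 := by
  unfold sgnVec; split <;> norm_num

lemma sgnVec_cube (S : Finset (Fin 6)) (i : Fin 6) : sgnVec S i ^ 3 = sgnVec S i := by
  unfold sgnVec; split <;> norm_num

lemma sgnVec_ne_zero (S : Finset (Fin 6)) : sgnVec S ≠ 0 := by
  intro h
  have := congrFun h 0
  unfold sgnVec at this
  simp only [Pi.zero_apply] at this
  split at this <;> norm_num at this

lemma segreVec_eq : segreVec = sgnVec ({0, 1, 2} : Finset (Fin 6)) := by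
  funext i
  fin_cases i <;> norm_num [segreVec, sgnVec, Fin.ext_iff]

lemma sum_sgnVec (S : Finset (Fin 6)) :
    (∑ i, sgnVec S i) = (S.card : ℂ) - (Sᶜ.card : ℂ) := by
  unfold sgnVec
  rw [Finset.sum_ite]
  simp [Finset.filter_mem_eq_inter, Finset.filter_not, Finset.compl_eq_univ_sdiff]
  ring

lemma sum_sgnVec_eq_zero_iff (S : Finset (Fin 6)) :
    (∑ i, sgnVec S i) = 0 ↔ S.card = 3 := by
  rw [sum_sgnVec, sub_eq_zero]
  have hc : S.card + Sᶜ.card = 6 := by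
    simpa using Finset.card_add_card_compl S
  constructor
  · intro h
    have : S.card = Sᶜ.card := by exact_mod_cast h
    omega
  · intro h
    have h2 : Sᶜ.card = 3 := by omega
    rw [h, h2]

lemma scaled_sgn_singular {t : ℂ} (ht : t ≠ 0) (S : Finset (Fin 6)) (hS : S.card = 3) :
    onSegre (t • sgnVec S) ∧ singularAt (t • sgnVec S) := by
  have hsum : (∑ i, sgnVec S i) = 0 := (sum_sgnVec_eq_zero_iff S).2 hS
  refine ⟨⟨?_, ?_⟩, ?_⟩
  · simp only [Pi.smul_apply, smul_eq_mul, ← Finset.mul_sum, hsum, mul_zero]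
  · have h3 : ∀ i, (t • sgnVec S) i ^ 3 = t ^ 3 * sgnVec S i := by
      intro i
      simp only [Pi.smul_apply, smul_eq_mul, mul_pow, sgnVec_cube]
    simp only [h3, ← Finset.mul_sum, hsum, mul_zero]
  · refine ⟨-3 * t ^ 2, 1, by simp, fun i => ?_⟩
    have hsq := sgnVec_sq S i
    simp only [Pi.smul_apply, smul_eq_mul, mul_pow, hsq]
    ring

lemma singular_structure {x : Fin 6 → ℂ} (hx : x ≠ 0) (hs : singularAt x) :
    x 0 ≠ 0 ∧ ∀ i, x i = x 0 ∨ x i = -(x 0) := by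
  obtain ⟨l, m, hlm, h⟩ := hs
  have hm : m ≠ 0 := by
    rintro rfl
    have h0 := h 0
    simp at h0
    exact hlm ⟨h0, rfl⟩
  have hsq : ∀ i, x i ^ 2 = x 0 ^ 2 := by
    intro i
    have h1 := h i
    have h2 := h 0
    have h3 : m * 3 * (x i ^ 2 - x 0 ^ 2) = 0 := by linear_combination h1 - h2
    rcases mul_eq_zero.mp h3 with h4 | h4
    · exact absurd h4 (by simpa using hm)
    · linear_combination h4
  have hx0 : x 0 ≠ 0 := by
    intro h0
    apply hx
    funext i
    have := hsq i
    rw [h0] at this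
    simpa [pow_eq_zero_iff] using this
  refine ⟨hx0, fun i => ?_⟩
  have h5 : (x i - x 0) * (x i + x 0) = 0 := by linear_combination hsq i
  rcases mul_eq_zero.mp h5 with h6 | h6
  · exact Or.inl (by linear_combination h6)
  · exact Or.inr (by linear_combination h6)

open Projectivization in
/-- Characterization of the singular locus via sign vectors. -/
lemma mem_segreSing_iff (p : Projectivization ℂ (Fin 6 → ℂ)) :
    p ∈ segreSing ↔ ∃ S : Finset (Fin 6), S.card = 3 ∧
      p = Projectivization.mk ℂ (sgnVec S) (sgnVec_ne_zero S) := by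
  constructor
  · rintro ⟨hon, hsing⟩
    obtain ⟨hx0, hpm⟩ := singular_structure p.rep_nonzero hsing
    classical
    set x := p.rep with hxdef
    set S : Finset (Fin 6) := Finset.univ.filter (fun i => x i = x 0) with hSdef
    have hval : ∀ i, x i = x 0 * sgnVec S i := by
      intro i
      rcases hpm i with hi | hi
      · have : i ∈ S := by simp [hSdef, hi]
        simp [sgnVec, this, hi]
      · have hne : x i ≠ x 0 := by
          rw [hi]
          intro hc
          apply hx0
          have : (2 : ℂ) * x 0 = 0 := by linear_combination -hc
          simpa using this
        have : i ∉ S := by simp [hSdef, hne]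
        simp [sgnVec, this, hi]
    have hxeq : x = x 0 • sgnVec S := by
      funext i; simpa using hval i
    have hsum : (∑ i, sgnVec S i) = 0 := by
      have : (∑ i, x i) = x 0 * ∑ i, sgnVec S i := by
        rw [Finset.mul_sum]
        exact Finset.sum_congr rfl fun i _ => hval i
      rw [hon.1] at this
      exact (mul_eq_zero.mp this.symm).resolve_left hx0
    refine ⟨S, (sum_sgnVec_eq_zero_iff S).1 hsum, ?_⟩
    have := Projectivization.mk_rep p
    rw [← this]
    rw [Projectivization.mk_eq_mk_iff']
    exact ⟨x 0, hxeq.symm⟩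
  · rintro ⟨S, hS, rfl⟩
    obtain ⟨u, hu⟩ := Projectivization.exists_smul_eq_mk_rep ℂ (sgnVec S) (sgnVec_ne_zero S)
    have hrep : (Projectivization.mk ℂ (sgnVec S) (sgnVec_ne_zero S)).rep
        = (u : ℂ) • sgnVec S := by
      rw [← hu]; rfl
    have := scaled_sgn_singular (t := (u : ℂ)) u.ne_zero S hS
    constructor
    · rw [hrep]; exact this.1
    · rw [hrep]; exact this.2

/-- There is a permutation matching any two subsets of the same size. -/
lemma exists_perm_matching (S T : Finset (Fin 6)) (h : S.card = T.card) :
    ∃ σ : Equiv.Perm (Fin 6), ∀ i, (σ i ∈ T ↔ i ∈ S) := by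
  classical
  have hcompl : Sᶜ.card = Tᶜ.card := by
    rw [Finset.card_compl, Finset.card_compl, h]
  let e : {i : Fin 6 // i ∈ S} ≃ {i : Fin 6 // i ∈ T} := Finset.equivOfCardEq h
  let f : {i : Fin 6 // ¬ i ∈ S} ≃ {i : Fin 6 // ¬ i ∈ T} :=
    ((Equiv.subtypeEquivRight (fun i => (Finset.mem_compl (s := S)).symm)).trans
      (Finset.equivOfCardEq hcompl)).trans
      (Equiv.subtypeEquivRight (fun i => Finset.mem_compl (s := T)))
  refine ⟨Equiv.subtypeCongr e f, fun i => ?_⟩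
  by_cases hi : i ∈ S
  · simp only [hi, iff_true]
    have : Equiv.subtypeCongr e f i = (e ⟨i, hi⟩ : Fin 6) := by
      simp [Equiv.subtypeCongr, hi]
    rw [this]
    exact (e ⟨i, hi⟩).2
  · simp only [hi, iff_false]
    have : Equiv.subtypeCongr e f i = (f ⟨i, hi⟩ : Fin 6) := by
      simp [Equiv.subtypeCongr, hi]
    rw [this]
    exact (f ⟨i, hi⟩).2


/-- The Segre cubic `{Σ xᵢ = Σ xᵢ³ = 0} ⊂ ℙ⁵` has exactly `10` singular points, namely
the orbit of `[1 : 1 : 1 : −1 : −1 : −1]` under permutation of the coordinates, and each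
of them is an ordinary double point. -/
theorem segre_cubic_singularities :
    segreSing =
      {p | ∃ (v : Fin 6 → ℂ) (hv : v ≠ 0), p = Projectivization.mk ℂ v hv ∧
        ∃ σ : Equiv.Perm (Fin 6), ∀ i, v i = segreVec (σ i)} ∧
    segreSing.ncard = 10 ∧
    ∀ p ∈ segreSing, isODPAt (Projectivization.rep p) := by
  classical
  have hT3 : ({0, 1, 2} : Finset (Fin 6)).card = 3 := by decide
  refine ⟨?_, ?_, ?_⟩
  · -- the set equality
    ext p
    rw [mem_segreSing_iff]
    constructor
    · rintro ⟨S, hS, rfl⟩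
      obtain ⟨σ, hσ⟩ := exists_perm_matching S ({0, 1, 2} : Finset (Fin 6)) (by rw [hS, hT3])
      refine ⟨sgnVec S, sgnVec_ne_zero S, rfl, σ, fun i => ?_⟩
      rw [segreVec_eq]
      unfold sgnVec
      simp [hσ i]
    · rintro ⟨v, hv, rfl, σ, hσ⟩
      set S : Finset (Fin 6) := Finset.image σ.symm ({0, 1, 2} : Finset (Fin 6)) with hSdef
      have hmem : ∀ i, i ∈ S ↔ σ i ∈ ({0, 1, 2} : Finset (Fin 6)) := by
        intro i
        simp only [hSdef, Finset.mem_image]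
        constructor
        · rintro ⟨j, hj, rfl⟩
          simpa using hj
        · intro hi
          exact ⟨σ i, hi, σ.symm_apply_apply i⟩
      have hveq : v = sgnVec S := by
        funext i
        rw [hσ i, segreVec_eq]
        unfold sgnVec
        simp [hmem i]
      have hcard : S.card = 3 := by
        rw [hSdef, Finset.card_image_of_injective _ σ.symm.injective, hT3]
      refine ⟨S, hcard, ?_⟩
      rw [Projectivization.mk_eq_mk_iff']
      exact ⟨1, by rw [hveq, one_smul]⟩
  · -- the cardinality
    set g : Finset (Fin 6) → Projectivization ℂ (Fin 6 → ℂ) :=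
      fun S => Projectivization.mk ℂ (sgnVec S) (sgnVec_ne_zero S) with hgdef
    set T' : Finset (Finset (Fin 6)) :=
      Finset.univ.filter (fun S => S.card = 3 ∧ (0 : Fin 6) ∈ S) with hT'def
    have himg : segreSing = g '' ↑T' := by
      ext p
      rw [mem_segreSing_iff]
      constructor
      · rintro ⟨S, hS, rfl⟩
        by_cases h0 : (0 : Fin 6) ∈ S
        · exact ⟨S, by simp [hT'def, hS, h0], rfl⟩
        · refine ⟨Sᶜ, by simp [hT'def, Finset.card_compl, hS, h0], ?_⟩
          simp only [hgdef]
          rw [Projectivization.mk_eq_mk_iff']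
          refine ⟨-1, ?_⟩
          funext i
          by_cases hi : i ∈ S <;>
            simp [sgnVec, hi]
      · rintro ⟨S, hS, rfl⟩
        simp only [hT'def, Finset.mem_coe, Finset.mem_filter] at hS
        exact ⟨S, hS.2.1, rfl⟩
    have hinj : Set.InjOn g ↑T' := by
      rintro S hS T hT hg
      simp only [hT'def, Finset.coe_filter, Set.mem_setOf_eq] at hS hT
      simp only [hgdef, Projectivization.mk_eq_mk_iff'] at hg
      obtain ⟨a, ha⟩ := hg
      have h0 : a * sgnVec T 0 = sgnVec S 0 := by
        have := congrFun ha 0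
        simpa using this
      have ha1 : a = 1 := by
        rw [show sgnVec T 0 = 1 by simp [sgnVec, hT.2.2],
          show sgnVec S 0 = 1 by simp [sgnVec, hS.2.2]] at h0
        simpa using h0
      rw [ha1, one_smul] at ha
      ext i
      have := congrFun ha i
      unfold sgnVec at this
      by_cases hiT : i ∈ T <;> by_cases hiS : i ∈ S <;>
        simp [hiT, hiS] at this ⊢ <;> norm_num at this
    rw [himg, Set.ncard_image_of_injOn hinj, Set.ncard_coe_finset]
    rw [hT'def]
    decide
  · -- ordinary double points
    rintro p ⟨hon, hsing⟩
    obtain ⟨hx0, hpm⟩ := singular_structure p.rep_nonzero hsing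
    set x := p.rep with hxdef
    have hxne : ∀ i, x i ≠ 0 := by
      intro i
      rcases hpm i with hi | hi <;> rw [hi] <;> simpa using hx0
    have hsq : ∀ i, x i ^ 2 = x 0 ^ 2 := by
      intro i
      rcases hpm i with hi | hi <;> rw [hi] <;> ring
    intro y _ H
    have key : ∀ i, x i * y i = x 0 * y 0 := by
      intro i
      set z : Fin 6 → ℂ := fun k => (if k = i then 1 else 0) - (if k = 0 then 1 else 0)
        with hzdef
      have hz : (∑ k, z k) = 0 := by
        simp [hzdef, Finset.sum_sub_distrib]
      have := H z hz
      simp only [hzdef, mul_sub, mul_ite, mul_one, mul_zero,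
        Finset.sum_sub_distrib, Finset.sum_ite_eq', Finset.mem_univ, if_true] at this
      linear_combination this / 6
    refine ⟨y 0 / x 0, ?_⟩
    funext i
    simp only [Pi.smul_apply, smul_eq_mul]
    rw [div_mul_eq_mul_div, eq_div_iff hx0]
    apply mul_left_cancel₀ (hxne i)
    linear_combination x 0 * key i - y 0 * hsq i
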